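/- Total variation sparsity of the falling factorial expansion: let h_1,...,h_n be the k-th order falling factorial functions over knots z_1 < ... < z_r (with n = r + k + 1 appropriately indexed), and let f = ∑_{j=1}^n α_j h_j. Then the total variation of the k-th derivative of f equals ∑_{j=k+2}^n |α_j|. -/

import Mathlib

/-- The `k`-th order falling factorial basis function `h_j` (0-based index `j`)
over input points `xs`. -/
noncomputable def ffh (k : ℕ) (xs : ℕ → ℝ) (j : ℕ) (x : ℝ) : ℝ :=
  if j ≤ k then ∏ ℓ ∈ Finset.range j, (x - xs ℓ)
  else (∏ ℓ ∈ Finset.range k, (x - xs (j - k + ℓ))) * (if xs (j - 1) < x then 1 else 0)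

/-- The falling factorial basis matrix `H^(k)`, with `H_{ij} = h_j(x_i)`. -/
noncomputable def ffMatrix (n k : ℕ) (xs : ℕ → ℝ) : Matrix (Fin n) (Fin n) ℝ :=
  Matrix.of fun i j => ffh k xs j (xs i)

open Polynomial in
lemma aux_iteratedDeriv_eval (k : ℕ) (p : ℝ[X]) :
    iteratedDeriv k (fun x => p.eval x) = fun x => (derivative^[k] p).eval x := by
  induction k generalizing p with
  | zero => simp
  | succ k ih =>
    have hd : deriv (fun x : ℝ => p.eval x) = fun x => (derivative p).eval x :=
      funext fun x => Polynomial.deriv p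
    rw [iteratedDeriv_succ', hd, ih, Function.iterate_succ_apply]

open Polynomial in
lemma aux_iter_deriv_C (k : ℕ) (p : ℝ[X]) (hp : p.natDegree ≤ k) :
    derivative^[k] p = C ((k.factorial : ℝ) * p.coeff k) := by
  have h0 : (derivative^[k] p).natDegree = 0 := by
    have := p.natDegree_iterate_derivative k
    omega
  rw [Polynomial.eq_C_of_natDegree_le_zero h0.le, Polynomial.coeff_iterate_derivative]
  simp [Nat.descFactorial_self, Nat.factorial]

open Polynomial Filter in
lemma part1 (n k : ℕ) (hkn : k + 1 ≤ n) (z : ℕ → ℝ)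
    (hz : StrictMono z) (a : ℕ → ℝ) (x : ℝ) (hx : ∀ j < n, x ≠ z j) :
    iteratedDeriv k (fun t => ∑ j ∈ Finset.range n, a j * ffh k z j t) x =
      (Nat.factorial k : ℝ) *
        (a k + ∑ j ∈ Finset.Ico (k + 1) n, a j * (if z (j - 1) ≤ x then 1 else 0)) := by
  classical
  set q : ℕ → ℝ[X] := fun j =>
    if j ≤ k then ∏ ℓ ∈ Finset.range j, (X - C (z ℓ))
    else if z (j-1) < x then ∏ ℓ ∈ Finset.range k, (X - C (z (j - k + ℓ))) else 0 with hq
  set P : ℝ[X] := ∑ j ∈ Finset.range n, C (a j) * q j with hP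
  -- eventual equality
  have hev : (fun t => ∑ j ∈ Finset.range n, a j * ffh k z j t) =ᶠ[nhds x]
      (fun t => P.eval t) := by
    have hj : ∀ j ∈ Finset.range n, ∀ᶠ t in nhds x, a j * ffh k z j t = (C (a j) * q j).eval t := by
      intro j hjn
      simp only [Finset.mem_range] at hjn
      by_cases hjk : j ≤ k
      · filter_upwards with t
        simp [ffh, hq, hjk, eval_prod]
      · push_neg at hjk
        have hj1 : j - 1 < n := by omega
        rcases lt_or_gt_of_ne (hx (j-1) hj1) with hlt | hgt
        · -- x < z (j-1) : eventually t < z (j-1), ffh = 0, q = 0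
          have : ∀ᶠ t in nhds x, t < z (j-1) := eventually_lt_nhds hlt
          filter_upwards [this] with t ht
          have : ¬ z (j-1) < t := by linarith
          simp [ffh, hq, Nat.not_le.mpr hjk, this, not_lt.mpr hlt.le]
        · -- z (j-1) < x
          have : ∀ᶠ t in nhds x, z (j-1) < t := eventually_gt_nhds hgt
          filter_upwards [this] with t ht
          simp [ffh, hq, Nat.not_le.mpr hjk, ht, hgt, eval_prod]
    have := (Filter.eventually_all_finset (Finset.range n)).2 hj
    filter_upwards [this] with t ht
    rw [hP, eval_finset_sum]
    exact Finset.sum_congr rfl fun j hj => ht j hj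
  -- natDegree bounds
  have hdeg : ∀ j, (q j).natDegree ≤ k := by
    intro j
    by_cases hjk : j ≤ k
    · simp only [hq, if_pos hjk]
      calc (∏ ℓ ∈ Finset.range j, (X - C (z ℓ))).natDegree
          = ∑ ℓ ∈ Finset.range j, (X - C (z ℓ)).natDegree :=
            Polynomial.natDegree_prod _ _ (fun i _ => X_sub_C_ne_zero _)
        _ ≤ k := by simp [natDegree_X_sub_C]; omega
    · simp only [hq, if_neg hjk]
      split
      · calc (∏ ℓ ∈ Finset.range k, (X - C (z (j - k + ℓ)))).natDegree
            = ∑ ℓ ∈ Finset.range k, (X - C (z (j - k + ℓ))).natDegree :=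
              Polynomial.natDegree_prod _ _ (fun i _ => X_sub_C_ne_zero _)
          _ ≤ k := by simp [natDegree_X_sub_C]
      · simp
  have hPdeg : P.natDegree ≤ k := by
    refine Polynomial.natDegree_sum_le_of_forall_le _ _ fun j _ => ?_
    exact le_trans (Polynomial.natDegree_C_mul_le _ _) (hdeg j)
  -- coefficient computation
  have hcoeffq : ∀ j, (q j).coeff k =
      if j < k then 0 else if j = k then 1 else if z (j-1) < x then 1 else 0 := by
    intro j
    have hmono : ∀ (m : ℕ) (c : ℕ → ℝ),
        (∏ ℓ ∈ Finset.range m, (X - C (c ℓ))).Monic ∧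
        (∏ ℓ ∈ Finset.range m, (X - C (c ℓ))).natDegree = m := by
      intro m c
      constructor
      · exact monic_prod_of_monic _ _ fun i _ => monic_X_sub_C _
      · rw [Polynomial.natDegree_prod _ _ (fun i _ => X_sub_C_ne_zero _)]
        simp [natDegree_X_sub_C]
    rcases lt_trichotomy j k with h | h | h
    · have := (hmono j z).2
      simp only [hq, if_pos h.le, if_pos h]
      exact Polynomial.coeff_eq_zero_of_natDegree_lt (by omega)
    · subst h
      simp only [hq, if_pos le_rfl, if_neg (lt_irrefl j), if_pos rfl]
      have h1 := (hmono j z).1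
      have h2 := (hmono j z).2
      have := h1.coeff_natDegree
      rw [h2] at this
      exact this
    · simp only [hq, if_neg (by omega : ¬ j ≤ k), if_neg (by omega : ¬ j < k),
        if_neg (by omega : ¬ j = k)]
      split
      · have h1 := (hmono k (fun ℓ => z (j - k + ℓ))).1
        have h2 := (hmono k (fun ℓ => z (j - k + ℓ))).2
        have := h1.coeff_natDegree
        rw [h2] at this
        exact this
      · simp
  have hPcoeff : P.coeff k =
      a k + ∑ j ∈ Finset.Ico (k + 1) n, a j * (if z (j - 1) ≤ x then 1 else 0) := by
    rw [hP, Polynomial.finset_sum_coeff]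
    simp only [Polynomial.coeff_C_mul, hcoeffq]
    rw [Finset.range_eq_Ico, ← Finset.sum_Ico_consecutive _ (Nat.zero_le (k+1)) hkn]
    congr 1
    · rw [← Finset.range_eq_Ico, Finset.sum_range_succ]
      have : ∀ j ∈ Finset.range k, a j * (if j < k then (0:ℝ) else if j = k then 1
          else if z (j-1) < x then 1 else 0) = 0 := by
        intro j hj
        simp only [Finset.mem_range] at hj
        simp [hj]
      rw [Finset.sum_eq_zero this]
      simp
    · refine Finset.sum_congr rfl fun j hj => ?_
      simp only [Finset.mem_Ico] at hj
      have h1 : ¬ j < k := by omega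
      have h2 : j ≠ k := by omega
      have hxne : x ≠ z (j-1) := hx (j-1) (by omega)
      have : (z (j-1) < x) = (z (j-1) ≤ x) := by
        simp only [eq_iff_iff]
        constructor
        · exact le_of_lt
        · intro h; exact lt_of_le_of_ne h (Ne.symm hxne)
      simp [h1, h2, this]
  rw [hev.iteratedDeriv_eq k, aux_iteratedDeriv_eval, aux_iter_deriv_C k P hPdeg]
  simp only [Polynomial.eval_C, hPcoeff]


lemma part2 (n k : ℕ) (hkn : k + 1 ≤ n) (z : ℕ → ℝ) (hz : StrictMono z) (a : ℕ → ℝ) :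
    eVariationOn
        (fun x : ℝ => (Nat.factorial k : ℝ) *
          (a k + ∑ j ∈ Finset.Ico (k + 1) n, a j * (if z (j - 1) ≤ x then 1 else 0)))
        Set.univ =
      ENNReal.ofReal ((Nat.factorial k : ℝ) * ∑ j ∈ Finset.Ico (k + 1) n, |a j|) := by
  classical
  set K : ℝ := (Nat.factorial k : ℝ) with hK
  have hKpos : 0 < K := by positivity
  set g : ℝ → ℝ := fun x => K *
    (a k + ∑ j ∈ Finset.Ico (k + 1) n, a j * (if z (j - 1) ≤ x then 1 else 0)) with hg
  set S := Finset.Ico (k + 1) n with hS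
  have hgdiff : ∀ s t : ℝ, g t - g s =
      K * ∑ j ∈ S, a j * ((if z (j-1) ≤ t then (1:ℝ) else 0) - (if z (j-1) ≤ s then 1 else 0)) := by
    intro s t
    have h1 : ∑ j ∈ S, a j * ((if z (j-1) ≤ t then (1:ℝ) else 0) - (if z (j-1) ≤ s then 1 else 0))
        = (∑ j ∈ S, a j * (if z (j-1) ≤ t then (1:ℝ) else 0))
          - ∑ j ∈ S, a j * (if z (j-1) ≤ s then (1:ℝ) else 0) := by
      rw [← Finset.sum_sub_distrib]
      exact Finset.sum_congr rfl fun j _ => by ring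
    simp only [hg]
    rw [h1]; ring
  apply le_antisymm
  · -- upper bound
    apply iSup_le
    rintro ⟨N, u, hu, -⟩
    set χ : ℕ → ℕ → ℝ := fun i j => if z (j-1) ≤ u i then 1 else 0 with hχ
    have hχ01 : ∀ i j, χ i j = 0 ∨ χ i j = 1 := by
      intro i j; simp only [hχ]; split <;> simp
    have hχmono : ∀ i j, χ i j ≤ χ (i+1) j := by
      intro i j
      simp only [hχ]
      split
      · rw [if_pos (le_trans (by assumption) (hu (Nat.le_succ i)))]
      · split <;> norm_num
    have hstep : ∀ i, edist (g (u (i+1))) (g (u i)) ≤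
        ENNReal.ofReal (K * ∑ j ∈ S, |a j| * (χ (i+1) j - χ i j)) := by
      intro i
      rw [edist_dist, Real.dist_eq]
      apply ENNReal.ofReal_le_ofReal
      rw [hgdiff (u i) (u (i+1)), abs_mul, abs_of_pos hKpos]
      apply mul_le_mul_of_nonneg_left _ hKpos.le
      refine le_trans (Finset.abs_sum_le_sum_abs _ _) ?_
      refine Finset.sum_le_sum fun j _ => ?_
      rw [abs_mul]
      apply mul_le_mul_of_nonneg_left _ (abs_nonneg _)
      rw [abs_of_nonneg (by linarith [hχmono i j])]
    calc ∑ i ∈ Finset.range N, edist (g (u (i+1))) (g (u i))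
        ≤ ∑ i ∈ Finset.range N, ENNReal.ofReal (K * ∑ j ∈ S, |a j| * (χ (i+1) j - χ i j)) :=
          Finset.sum_le_sum fun i _ => hstep i
      _ = ENNReal.ofReal (∑ i ∈ Finset.range N, K * ∑ j ∈ S, |a j| * (χ (i+1) j - χ i j)) := by
          rw [ENNReal.ofReal_sum_of_nonneg]
          intro i _
          have : 0 ≤ ∑ j ∈ S, |a j| * (χ (i+1) j - χ i j) :=
            Finset.sum_nonneg fun j _ => mul_nonneg (abs_nonneg _) (by linarith [hχmono i j])
          positivity
      _ ≤ ENNReal.ofReal (K * ∑ j ∈ S, |a j|) := by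
          apply ENNReal.ofReal_le_ofReal
          rw [← Finset.mul_sum]
          apply mul_le_mul_of_nonneg_left _ hKpos.le
          rw [Finset.sum_comm]
          refine Finset.sum_le_sum fun j _ => ?_
          rw [← Finset.mul_sum, Finset.sum_range_sub (fun i => χ i j)]
          rcases hχ01 N j with h | h <;> rcases hχ01 0 j with h' | h' <;>
            rw [h, h'] <;> nlinarith [abs_nonneg (a j)]
  · -- lower bound
    set m := n - (k+1) with hm
    rcases Nat.eq_zero_or_pos m with hm0 | hmpos
    · have hSe : S = ∅ := by rw [hS, Finset.Ico_eq_empty_iff]; omega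
      simp [hSe]
    set u : ℕ → ℝ := fun i => if i = 0 then z k - 1 else z (k + min (i-1) (m-1)) with hu
    have humono : Monotone u := by
      apply monotone_nat_of_le_succ
      intro i
      rcases Nat.eq_zero_or_pos i with rfl | hi
      · simp only [hu, if_pos rfl, if_neg (Nat.one_ne_zero)]
        have : z k ≤ z (k + min 0 (m-1)) := by simp
        linarith
      · simp only [hu]
        rw [if_neg (by omega), if_neg (by omega)]
        exact hz.monotone (by omega)
    have hchi : ∀ i ≤ m, ∀ j ∈ S, (if z (j-1) ≤ u i then (1:ℝ) else 0) =
        if j ≤ k + i then 1 else 0 := by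
      intro i hi j hj
      rw [hS, Finset.mem_Ico] at hj
      rcases Nat.eq_zero_or_pos i with rfl | hipos
      · have hu0 : u 0 = z k - 1 := by simp [hu]
        have h1 : z k ≤ z (j-1) := hz.monotone (by omega)
        rw [hu0, if_neg (by linarith), if_neg (by omega)]
      · have hune : u i = z (k + (i-1)) := by
          simp only [hu]; rw [if_neg (by omega), min_eq_left (by omega)]
        rw [hune]
        have hiff : z (j-1) ≤ z (k + (i-1)) ↔ j ≤ k + i := by
          rw [hz.le_iff_le]; omega
        by_cases hle : j ≤ k + i
        · rw [if_pos (hiff.mpr hle), if_pos hle]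
        · rw [if_neg (fun h => hle (hiff.mp h)), if_neg hle]
    have hkey : ∀ i < m, edist (g (u (i+1))) (g (u i)) = ENNReal.ofReal (K * |a (k+1+i)|) := by
      intro i hi
      rw [edist_dist, Real.dist_eq]
      have hd : g (u (i+1)) - g (u i) = K * a (k+1+i) := by
        rw [hgdiff (u i) (u (i+1))]
        congr 1
        have h1 : ∀ j ∈ S,
            a j * ((if z (j-1) ≤ u (i+1) then (1:ℝ) else 0) - (if z (j-1) ≤ u i then 1 else 0))
            = a j * ((if j ≤ k + (i+1) then (1:ℝ) else 0) - (if j ≤ k + i then 1 else 0)) := by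
          intro j hjmem
          rw [hchi (i+1) (by omega) j hjmem, hchi i (by omega) j hjmem]
        rw [Finset.sum_congr rfl h1, Finset.sum_eq_single (k+1+i)]
        · rw [if_pos (by omega), if_neg (by omega)]; ring
        · intro j hjmem hne
          rw [hS, Finset.mem_Ico] at hjmem
          by_cases h : j ≤ k + i
          · rw [if_pos (by omega), if_pos h]; ring
          · rw [if_neg (by omega), if_neg h]; ring
        · intro habs
          exact absurd (by rw [hS, Finset.mem_Ico]; omega) habs
      rw [hd, abs_mul, abs_of_pos hKpos]
    calc ENNReal.ofReal (K * ∑ j ∈ S, |a j|)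
        = ENNReal.ofReal (∑ i ∈ Finset.range m, K * |a (k+1+i)|) := by
          rw [hS, Finset.sum_Ico_eq_sum_range, ← Finset.mul_sum]
      _ = ∑ i ∈ Finset.range m, ENNReal.ofReal (K * |a (k+1+i)|) := by
          rw [ENNReal.ofReal_sum_of_nonneg]
          intro i _; positivity
      _ = ∑ i ∈ Finset.range m, edist (g (u (i+1))) (g (u i)) := by
          refine Finset.sum_congr rfl fun i hi => ?_
          rw [hkey i (Finset.mem_range.mp hi)]
      _ ≤ eVariationOn g Set.univ :=
          eVariationOn.sum_le (f := g) (n := m) humono (fun i => Set.mem_univ (u i))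


/-- Total variation sparsity of the falling factorial expansion: for
`f = ∑_j α_j h_j`, the `k`-th derivative of `f` (away from the knots) is the step
function `g(x) = k! (α_{k+1} + ∑_{j≥k+2} α_j 1{x ≥ z_{j-k-1+k}})`, whose total
variation equals `k! ∑_{j=k+2}^n |α_j|`  (0-based indices here). -/
theorem falling_factorial_tv_sparsity (n k : ℕ) (hkn : k + 1 ≤ n) (z : ℕ → ℝ)
    (hz : StrictMono z) (a : ℕ → ℝ) :
    (∀ x : ℝ, (∀ j < n, x ≠ z j) →
      iteratedDeriv k (fun t => ∑ j ∈ Finset.range n, a j * ffh k z j t) x =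
        (Nat.factorial k : ℝ) *
          (a k + ∑ j ∈ Finset.Ico (k + 1) n, a j * (if z (j - 1) ≤ x then 1 else 0))) ∧
    eVariationOn
        (fun x : ℝ => (Nat.factorial k : ℝ) *
          (a k + ∑ j ∈ Finset.Ico (k + 1) n, a j * (if z (j - 1) ≤ x then 1 else 0)))
        Set.univ =
      ENNReal.ofReal ((Nat.factorial k : ℝ) * ∑ j ∈ Finset.Ico (k + 1) n, |a j|) := by
  exact ⟨fun x hx => part1 n k hkn z hz a x hx, part2 n k hkn z hz a⟩
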